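/- Let n be an odd positive integer and define f : ℂ → ℂ by f(q) = (qⁿ − q⁻ⁿ)/(q − q⁻¹). Then f is differentiable at the imaginary unit i and its derivative vanishes there: deriv f i = 0. -/

import Mathlib

/-- For odd `n`, the quantum integer `[n](q) = (qⁿ − q⁻ⁿ)/(q − q⁻¹)` is differentiable
at `q = i` and its derivative vanishes there. -/
theorem deriv_quantumInteger_at_I (n : ℕ) (hn : 0 < n) (hodd : Odd n) :
    DifferentiableAt ℂ
        (fun q : ℂ => (q ^ n - q ^ (-(n : ℤ))) / (q - q⁻¹)) Complex.I ∧
    deriv (fun q : ℂ => (q ^ n - q ^ (-(n : ℤ))) / (q - q⁻¹)) Complex.I = 0 := by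
  have hI : (Complex.I : ℂ) ≠ 0 := Complex.I_ne_zero
  obtain ⟨k, hk⟩ := hodd
  -- derivative of numerator
  have hNum := (hasDerivAt_pow n Complex.I).sub
    (hasDerivAt_zpow (-(n : ℤ)) Complex.I (Or.inl hI))
  -- derivative of denominator
  have hDen : HasDerivAt (fun q : ℂ => q - q⁻¹)
      (1 - -(Complex.I ^ 2)⁻¹) Complex.I :=
    (hasDerivAt_id _).sub (hasDerivAt_inv hI)
  have hD0 : Complex.I - Complex.I⁻¹ ≠ 0 := by
    rw [Complex.inv_I, sub_neg_eq_add]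
    intro h
    have : (2 : ℂ) * Complex.I = 0 := by ring_nf; ring_nf at h; exact h
    simp [Complex.I_ne_zero] at this
  -- numerator derivative vanishes
  have h1 : Complex.I ^ (n - 1) = (-1 : ℂ) ^ k := by
    subst hk
    have : 2 * k + 1 - 1 = 2 * k := rfl
    rw [this, pow_mul, Complex.I_sq]
  have h2 : Complex.I ^ ((-(n : ℤ)) - 1) = (-1 : ℂ) ^ (k + 1) := by
    have he : (-(n : ℤ)) - 1 = -((2 * (k + 1) : ℕ) : ℤ) := by
      subst hk; push_cast; ring
    rw [he, zpow_neg, zpow_natCast, pow_mul, Complex.I_sq, ← inv_pow, inv_neg, inv_one]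
  have hN' : (n : ℂ) * Complex.I ^ (n - 1)
      - ((-(n : ℤ) : ℤ) : ℂ) * Complex.I ^ ((-(n : ℤ)) - 1) = 0 := by
    rw [h1, h2, pow_succ]
    push_cast
    ring
  have hD' : (1 : ℂ) - -(Complex.I ^ 2)⁻¹ = 0 := by
    rw [Complex.I_sq]; norm_num
  have hdiv := hNum.div hDen hD0
  rw [hN', hD'] at hdiv
  refine ⟨hdiv.differentiableAt, ?_⟩
  have := hdiv.deriv
  rw [show (fun q : ℂ => (q ^ n - q ^ (-(n : ℤ))) / (q - q⁻¹)) = (((fun x : ℂ => x ^ n) - fun x : ℂ => x ^ (-(n : ℤ))) / fun q : ℂ => q - q⁻¹) from rfl, this]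
  ring
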